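/- Let (Xᵢ, Yᵢ), i = 1..n, be i.i.d. with Yᵢ ∈ {0,1,∅}, fix y ∈ {0,1} with p_y := P[Y=y] > 0, and fix a function h. Define γ = P[h(X)=ȳ | Y=y] and the empirical version γ_S = (Σᵢ 1[h(Xᵢ)=ȳ]1[Yᵢ=y]) / (Σᵢ 1[Yᵢ=y]) (defined arbitrarily when the denominator is zero). Then for any t ∈ (0,1), P[|γ_S − γ| > t] ≤ 3·exp(−(t²/8)·n·p_y). -/

import Mathlib

open MeasureTheory ProbabilityTheory
open scoped ENNReal

instance : MeasurableSpace (Option Bool) := ⊤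

lemma measurableSet_optionBool (s : Set (Option Bool)) : MeasurableSet s :=
  MeasurableSpace.measurableSet_top

lemma measurableSet_bool' (s : Set Bool) : MeasurableSet s :=
  MeasurableSpace.measurableSet_top


lemma aux_exp_quad {x : ℝ} (h : |x| ≤ 1) : Real.exp x ≤ 1 + x + x ^ 2 := by
  have hb := Real.exp_bound h (n := 2) (by norm_num)
  have h2 : (∑ i ∈ Finset.range 2, x ^ i / i.factorial) = 1 + x := by
    simp [Finset.sum_range_succ]
  rw [h2] at hb
  have hx2 : |x| ^ 2 = x ^ 2 := sq_abs x
  norm_num [Nat.factorial] at hb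
  have := abs_le.mp hb
  nlinarith [this.2]

lemma aux_exp_neg {x : ℝ} (h0 : 0 ≤ x) (h1 : x ≤ 1/2) : Real.exp (-x) ≤ 1 - x / 2 := by
  have hb := aux_exp_quad (x := -x) (by rw [abs_neg, abs_of_nonneg h0]; linarith)
  nlinarith

lemma factor_up {γ lam : ℝ} (hγ0 : 0 ≤ γ) (hγ1 : γ ≤ 1) (hl0 : 0 ≤ lam) (hl1 : lam ≤ 1) :
    γ * Real.exp (lam * (1 - γ)) + (1 - γ) * Real.exp (-(lam * γ)) ≤ Real.exp (lam ^ 2) := by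
  have key : γ * Real.exp (lam * (1 - γ)) + (1 - γ) * Real.exp (-(lam * γ))
      = Real.exp (-(lam * γ)) * (γ * Real.exp lam + (1 - γ)) := by
    rw [show lam * (1-γ) = lam + -(lam*γ) by ring, Real.exp_add]; ring
  rw [key]
  have h1 : γ * Real.exp lam + (1 - γ) ≤ Real.exp (γ * (Real.exp lam - 1)) := by
    have := Real.add_one_le_exp (γ * (Real.exp lam - 1))
    linarith
  have h2 : Real.exp (-(lam*γ)) * (γ * Real.exp lam + (1-γ)) ≤
      Real.exp (-(lam*γ)) * Real.exp (γ * (Real.exp lam - 1)) := by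
    apply mul_le_mul_of_nonneg_left h1 (Real.exp_nonneg _)
  refine h2.trans ?_
  rw [← Real.exp_add]
  apply Real.exp_le_exp.mpr
  have h3 : Real.exp lam ≤ 1 + lam + lam ^ 2 := aux_exp_quad (by rw [abs_of_nonneg hl0]; exact hl1)
  have h4 : 1 + lam ≤ Real.exp lam := by linarith [Real.add_one_le_exp lam]
  nlinarith

lemma factor_down {γ lam : ℝ} (hγ0 : 0 ≤ γ) (hγ1 : γ ≤ 1) (hl0 : 0 ≤ lam) (hl1 : lam ≤ 1) :
    γ * Real.exp (-(lam * (1 - γ))) + (1 - γ) * Real.exp (lam * γ) ≤ Real.exp (lam ^ 2) := by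
  have key : γ * Real.exp (-(lam * (1 - γ))) + (1 - γ) * Real.exp (lam * γ)
      = Real.exp (lam * γ) * (γ * Real.exp (-lam) + (1 - γ)) := by
    rw [show -(lam * (1-γ)) = -lam + lam*γ by ring, Real.exp_add]; ring
  rw [key]
  have h1 : γ * Real.exp (-lam) + (1 - γ) ≤ Real.exp (γ * (Real.exp (-lam) - 1)) := by
    have := Real.add_one_le_exp (γ * (Real.exp (-lam) - 1))
    linarith
  have h2 : Real.exp (lam*γ) * (γ * Real.exp (-lam) + (1-γ)) ≤
      Real.exp (lam*γ) * Real.exp (γ * (Real.exp (-lam) - 1)) :=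
    mul_le_mul_of_nonneg_left h1 (Real.exp_nonneg _)
  refine h2.trans ?_
  rw [← Real.exp_add]
  apply Real.exp_le_exp.mpr
  have h3 : Real.exp (-lam) ≤ 1 + -lam + lam ^ 2 := by
    have := aux_exp_quad (x := -lam) (by rw [abs_neg, abs_of_nonneg hl0]; exact hl1)
    nlinarith
  have h4 : 1 + -lam ≤ Real.exp (-lam) := by linarith [Real.add_one_le_exp (-lam)]
  nlinarith

lemma coord_bound {p t : ℝ} (hp0 : 0 < p) (hp1 : p ≤ 1) (ht : 0 < t) (ht1 : t < 1) :
    1 - p + p * Real.exp (-(t^2/4)) ≤ Real.exp (-(t^2/8) * p) := by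
  have h1 : Real.exp (-(t^2/4)) ≤ 1 - (t^2/4)/2 := aux_exp_neg (by positivity) (by nlinarith)
  have h2 : 1 - p + p * Real.exp (-(t^2/4)) ≤ 1 + (-(t^2/8)*p) := by nlinarith
  have h3 := Real.add_one_le_exp (-(t^2/8)*p)
  linarith


lemma chernoff_piece (n : ℕ) (r : Option Bool → ℝ) (hr : ∀ v, 0 ≤ r v)
    (av : Option Bool → ℝ) (P : (Fin n → Option Bool) → Prop) [DecidablePred P]
    (hP : ∀ c, P c → 0 ≤ ∑ i, av (c i)) :
    ∑ c ∈ Finset.univ.filter P, ∏ i, r (c i) ≤ (∑ v, r v * Real.exp (av v)) ^ n := by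
  have step1 : ∑ c ∈ Finset.univ.filter P, ∏ i, r (c i)
      ≤ ∑ c : Fin n → Option Bool, ∏ i, (r (c i) * Real.exp (av (c i))) := by
    rw [Finset.sum_filter]
    apply Finset.sum_le_sum
    intro c _
    by_cases hc : P c
    · simp only [hc, if_true]
      rw [Finset.prod_mul_distrib, ← Real.exp_sum]
      have h1 : (1:ℝ) ≤ Real.exp (∑ i, av (c i)) := Real.one_le_exp (hP c hc)
      have h2 : 0 ≤ ∏ i, r (c i) := Finset.prod_nonneg fun i _ => hr _
      nlinarith
    · simp only [hc, if_false]
      exact Finset.prod_nonneg fun i _ => mul_nonneg (hr _) (Real.exp_nonneg _)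
  refine step1.trans ?_
  rw [← Fintype.prod_sum (fun (_ : Fin n) v => r v * Real.exp (av v))]
  rw [Finset.prod_const, Finset.card_univ, Fintype.card_fin]

lemma real_main (n : ℕ) (p γ t : ℝ) (r : Option Bool → ℝ)
    (hrt : r (some true) = p * γ) (hrf : r (some false) = p * (1 - γ)) (hrn : r none = 1 - p)
    (hp0 : 0 < p) (hp1 : p ≤ 1) (hγ0 : 0 ≤ γ) (hγ1 : γ ≤ 1) (ht : 0 < t) (ht1 : t < 1)
    (T : Finset (Fin n → Option Bool))
    (hT : ∀ c ∈ T, t < |(∑ i, if c i = some true then (1:ℝ) else 0) /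
             (∑ i, if c i ≠ none then (1:ℝ) else 0) - γ|) :
    ∑ c ∈ T, ∏ i, r (c i) ≤ 3 * Real.exp (-(t^2/8) * n * p) := by
  classical
  have hr : ∀ v, 0 ≤ r v := by
    rintro (_ | b)
    · rw [hrn]; linarith
    · cases b
      · rw [hrf]; nlinarith
      · rw [hrt]; nlinarith
  set k : (Fin n → Option Bool) → ℝ := fun c => ∑ i, if c i = some true then (1:ℝ) else 0 with hk
  set m : (Fin n → Option Bool) → ℝ := fun c => ∑ i, if c i ≠ none then (1:ℝ) else 0 with hm
  set f : (Fin n → Option Bool) → ℝ := fun c => ∏ i, r (c i) with hf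
  have hfnn : ∀ c, 0 ≤ f c := fun c => Finset.prod_nonneg fun i _ => hr _
  set av1 : Option Bool → ℝ :=
    fun v => t/2 * (Option.elim v 0 (fun b => if b then 1 - (γ+t) else -(γ+t))) with hav1
  set av2 : Option Bool → ℝ :=
    fun v => t/2 * (Option.elim v 0 (fun b => if b then (γ-t) - 1 else γ-t)) with hav2
  have hsum1 : ∀ c, ∑ i, av1 (c i) = t/2 * (k c - (γ+t) * m c) := by
    intro c
    have : ∀ i : Fin n, av1 (c i) = t/2 * ((if c i = some true then (1:ℝ) else 0)
        - (γ+t) * (if c i ≠ none then (1:ℝ) else 0)) := by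
      intro i; rcases hci : c i with _ | b
      · simp [hav1]
      · cases b <;> simp [hav1] <;> ring
    rw [Finset.sum_congr rfl (fun i _ => this i), ← Finset.mul_sum, Finset.sum_sub_distrib,
      ← Finset.mul_sum]
  have hsum2 : ∀ c, ∑ i, av2 (c i) = t/2 * ((γ-t) * m c - k c) := by
    intro c
    have : ∀ i : Fin n, av2 (c i) = t/2 * ((γ-t) * (if c i ≠ none then (1:ℝ) else 0)
        - (if c i = some true then (1:ℝ) else 0)) := by
      intro i; rcases hci : c i with _ | b
      · simp [hav2]
      · cases b <;> simp [hav2] <;> ring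
    rw [Finset.sum_congr rfl (fun i _ => this i), ← Finset.mul_sum, Finset.sum_sub_distrib,
      ← Finset.mul_sum]
  set P1 : (Fin n → Option Bool) → Prop := fun c => 0 ≤ ∑ i, av1 (c i) with hP1
  set P2 : (Fin n → Option Bool) → Prop := fun c => 0 ≤ ∑ i, av2 (c i) with hP2
  set P3 : (Fin n → Option Bool) → Prop := fun c => ∀ i, c i = none with hP3
  set A := Finset.univ.filter P1 with hA
  set B := Finset.univ.filter P2 with hB
  set C := Finset.univ.filter P3 with hC
  -- covering
  have hcov : T ⊆ A ∪ B ∪ C := by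
    intro c hc
    have habs : t < |k c / m c - γ| := hT c hc
    simp only [hA, hB, hC, Finset.mem_union, Finset.mem_filter, Finset.mem_univ, true_and]
    by_cases h3 : ∀ i, c i = none
    · right; exact h3
    · left
      push_neg at h3
      obtain ⟨i0, hi0⟩ := h3
      have hmpos : 0 < m c := by
        apply Finset.sum_pos' (fun i _ => by positivity)
        exact ⟨i0, Finset.mem_univ _, by simp [hi0]⟩
      rcases lt_abs.mp habs with hcase | hcase
      · left
        show 0 ≤ ∑ i, av1 (c i)
        rw [hsum1 c]
        have := (lt_div_iff₀ hmpos).mp (by linarith : γ + t < k c / m c)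
        nlinarith
      · right
        show 0 ≤ ∑ i, av2 (c i)
        rw [hsum2 c]
        have := (div_lt_iff₀ hmpos).mp (by linarith : k c / m c < γ - t)
        nlinarith
  have hsplit : ∑ c ∈ T, f c ≤ ∑ c ∈ A, f c + ∑ c ∈ B, f c + ∑ c ∈ C, f c := by
    have h0 : ∑ c ∈ T, f c ≤ ∑ c ∈ A ∪ B ∪ C, f c :=
      Finset.sum_le_sum_of_subset_of_nonneg hcov (fun c _ _ => hfnn c)
    have h1 := Finset.sum_union_inter (s₁ := A ∪ B) (s₂ := C) (f := f)
    have h2 := Finset.sum_union_inter (s₁ := A) (s₂ := B) (f := f)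
    have n1 : 0 ≤ ∑ c ∈ (A ∪ B) ∩ C, f c := Finset.sum_nonneg fun c _ => hfnn c
    have n2 : 0 ≤ ∑ c ∈ A ∩ B, f c := Finset.sum_nonneg fun c _ => hfnn c
    linarith
  -- per-coordinate sum bounds
  have hcoord : ∀ av : Option Bool → ℝ, av none = 0 → (γ * Real.exp (av (some true)) +
      (1-γ) * Real.exp (av (some false)) ≤ Real.exp (-(t^2/4))) →
      ∑ v, r v * Real.exp (av v) ≤ Real.exp (-(t^2/8) * p) := by
    intro av hnone hfac
    have hsum : ∑ v : Option Bool, r v * Real.exp (av v)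
        = r none * Real.exp (av none) + (r (some false) * Real.exp (av (some false))
          + r (some true) * Real.exp (av (some true))) := by
      rw [Fintype.sum_option]
      congr 1
      rw [Fintype.sum_bool]
      ring
    rw [hsum, hrn, hrf, hrt, hnone, Real.exp_zero]
    have hb : p * (1 - γ) * Real.exp (av (some false)) + p * γ * Real.exp (av (some true))
        ≤ p * Real.exp (-(t^2/4)) := by
      have := mul_le_mul_of_nonneg_left hfac (le_of_lt hp0)
      nlinarith
    have h2 := coord_bound hp0 hp1 ht ht1
    linarith
  -- factor bounds for av1 and av2
  have hl0 : (0:ℝ) ≤ t/2 := by linarith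
  have hl1 : t/2 ≤ 1 := by linarith
  have hEsplit : ∀ x : ℝ, Real.exp (x + -(t^2/2)) = Real.exp x * Real.exp (-(t^2/2)) :=
    fun x => Real.exp_add _ _
  have hE4 : Real.exp ((t/2)^2) * Real.exp (-(t^2/2)) = Real.exp (-(t^2/4)) := by
    rw [← Real.exp_add]; congr 1; ring
  have hfac1 : γ * Real.exp (av1 (some true)) + (1-γ) * Real.exp (av1 (some false))
      ≤ Real.exp (-(t^2/4)) := by
    have e1 : av1 (some true) = t/2 * (1-γ) + -(t^2/2) := by simp [hav1]; ring
    have e2 : av1 (some false) = -(t/2 * γ) + -(t^2/2) := by simp [hav1]; ring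
    rw [e1, e2, hEsplit, hEsplit]
    have hfu := factor_up hγ0 hγ1 hl0 hl1
    have hEnn : (0:ℝ) ≤ Real.exp (-(t^2/2)) := Real.exp_nonneg _
    calc γ * (Real.exp (t/2*(1-γ)) * Real.exp (-(t^2/2)))
          + (1-γ) * (Real.exp (-(t/2*γ)) * Real.exp (-(t^2/2)))
        = (γ * Real.exp (t/2*(1-γ)) + (1-γ) * Real.exp (-(t/2*γ))) * Real.exp (-(t^2/2)) := by
          ring
      _ ≤ Real.exp ((t/2)^2) * Real.exp (-(t^2/2)) := mul_le_mul_of_nonneg_right hfu hEnn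
      _ = Real.exp (-(t^2/4)) := hE4
  have hfac2 : γ * Real.exp (av2 (some true)) + (1-γ) * Real.exp (av2 (some false))
      ≤ Real.exp (-(t^2/4)) := by
    have e1 : av2 (some true) = -(t/2 * (1-γ)) + -(t^2/2) := by simp [hav2]; ring
    have e2 : av2 (some false) = t/2 * γ + -(t^2/2) := by simp [hav2]; ring
    rw [e1, e2, hEsplit, hEsplit]
    have hfu := factor_down hγ0 hγ1 hl0 hl1
    have hEnn : (0:ℝ) ≤ Real.exp (-(t^2/2)) := Real.exp_nonneg _
    calc γ * (Real.exp (-(t/2*(1-γ))) * Real.exp (-(t^2/2)))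
          + (1-γ) * (Real.exp (t/2*γ) * Real.exp (-(t^2/2)))
        = (γ * Real.exp (-(t/2*(1-γ))) + (1-γ) * Real.exp (t/2*γ)) * Real.exp (-(t^2/2)) := by
          ring
      _ ≤ Real.exp ((t/2)^2) * Real.exp (-(t^2/2)) := mul_le_mul_of_nonneg_right hfu hEnn
      _ = Real.exp (-(t^2/4)) := hE4
  have hpow : Real.exp (-(t^2/8) * p) ^ n = Real.exp (-(t^2/8) * n * p) := by
    rw [← Real.exp_nat_mul]; congr 1; ring
  have hnn1 : (0:ℝ) ≤ ∑ v, r v * Real.exp (av1 v) :=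
    Finset.sum_nonneg fun v _ => mul_nonneg (hr v) (Real.exp_nonneg _)
  have hnn2 : (0:ℝ) ≤ ∑ v, r v * Real.exp (av2 v) :=
    Finset.sum_nonneg fun v _ => mul_nonneg (hr v) (Real.exp_nonneg _)
  have hSA : ∑ c ∈ A, f c ≤ Real.exp (-(t^2/8) * n * p) := by
    calc ∑ c ∈ A, f c ≤ (∑ v, r v * Real.exp (av1 v)) ^ n :=
          chernoff_piece n r hr av1 P1 (fun c hc => hc)
      _ ≤ Real.exp (-(t^2/8) * p) ^ n :=
          pow_le_pow_left₀ hnn1 (hcoord av1 (by simp [hav1]) hfac1) n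
      _ = Real.exp (-(t^2/8) * n * p) := hpow
  have hSB : ∑ c ∈ B, f c ≤ Real.exp (-(t^2/8) * n * p) := by
    calc ∑ c ∈ B, f c ≤ (∑ v, r v * Real.exp (av2 v)) ^ n :=
          chernoff_piece n r hr av2 P2 (fun c hc => hc)
      _ ≤ Real.exp (-(t^2/8) * p) ^ n :=
          pow_le_pow_left₀ hnn2 (hcoord av2 (by simp [hav2]) hfac2) n
      _ = Real.exp (-(t^2/8) * n * p) := hpow
  have hSC : ∑ c ∈ C, f c ≤ Real.exp (-(t^2/8) * n * p) := by
    have hCsub : C ⊆ {fun _ => none} := by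
      intro c hc
      rw [hC, Finset.mem_filter] at hc
      rw [Finset.mem_singleton]
      funext i
      exact hc.2 i
    calc ∑ c ∈ C, f c ≤ ∑ c ∈ ({fun _ => none} : Finset (Fin n → Option Bool)), f c :=
          Finset.sum_le_sum_of_subset_of_nonneg hCsub (fun c _ _ => hfnn c)
      _ = (1-p) ^ n := by
          rw [Finset.sum_singleton, hf]
          simp [hrn]
      _ ≤ Real.exp (-(t^2/8) * p) ^ n := by
          have h1 : (0:ℝ) ≤ 1 - p := by linarith
          have h2 : 1 - p ≤ Real.exp (-(t^2/8) * p) := by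
            have h3 := Real.add_one_le_exp (-(t^2/8) * p)
            have h4 : t^2 ≤ 1 := by nlinarith
            have h5 : p * t^2 ≤ p * 1 := mul_le_mul_of_nonneg_left h4 (le_of_lt hp0)
            nlinarith
          exact pow_le_pow_left₀ h1 h2 n
      _ = Real.exp (-(t^2/8) * n * p) := hpow
  linarith


/-- Deviation bound for an empirical class-conditional error rate with random denominator:
`P[|γ_S − γ| > t] ≤ 3·exp(−(t²/8)·n·p_y)`. -/
theorem stmt_11 {Ω 𝓧 : Type*} [MeasurableSpace Ω] [MeasurableSpace 𝓧]
    (μ : Measure Ω) [IsProbabilityMeasure μ]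
    (n : ℕ) (X : Fin n → Ω → 𝓧) (Yv : Fin n → Ω → Option Bool)
    (hX : ∀ i, Measurable (X i)) (hYv : ∀ i, Measurable (Yv i))
    -- the pairs (Xᵢ, Yᵢ) are i.i.d. with common law ν
    (ν : Measure (𝓧 × Option Bool)) [IsProbabilityMeasure ν]
    (hiid : iIndepFun (fun i ω => (X i ω, Yv i ω)) μ)
    (hdist : ∀ i, Measure.map (fun ω => (X i ω, Yv i ω)) μ = ν)
    (y ybar : Bool) (h : 𝓧 → Bool) (hh : Measurable h)
    (hpy : 0 < (ν {q | q.2 = some y}).toReal) :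
    ∀ t : ℝ, 0 < t → t < 1 →
      μ {ω | t < |(∑ i, if h (X i ω) = ybar ∧ Yv i ω = some y then (1 : ℝ) else 0) /
                  (∑ i, if Yv i ω = some y then (1 : ℝ) else 0) -
                (ν[{q | h q.1 = ybar} | {q | q.2 = some y}]).toReal|} ≤
        ENNReal.ofReal (3 * Real.exp (-(t ^ 2 / 8) * n * (ν {q | q.2 = some y}).toReal)) := by
  classical
  intro t ht ht1
  set B : Set (𝓧 × Option Bool) := {q | q.2 = some y} with hB
  set A : Set (𝓧 × Option Bool) := {q | h q.1 = ybar} with hA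
  have hBm : MeasurableSet B := by
    rw [hB]
    exact measurable_snd (measurableSet_optionBool {some y})
  have hAm : MeasurableSet A := by
    rw [hA]
    exact (hh.comp measurable_fst) (measurableSet_bool' {ybar})
  set v : 𝓧 × Option Bool → Option Bool :=
    fun q => if q.2 = some y then (if h q.1 = ybar then some true else some false) else none with hv
  have hvm : Measurable v := by
    apply Measurable.ite hBm
    · exact Measurable.ite hAm measurable_const measurable_const
    · exact measurable_const
  set V : Fin n → Ω → Option Bool := fun i ω => v (X i ω, Yv i ω) with hV
  have hVm : ∀ i, Measurable (V i) := fun i => hvm.comp ((hX i).prodMk (hYv i))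
  have hVind : iIndepFun V μ :=
    hiid.comp (fun _ => v) (fun _ => hvm)
  have hVdist : ∀ (i : Fin n) (s : Set (Option Bool)), μ (V i ⁻¹' s) = ν (v ⁻¹' s) := by
    intro i s
    rw [← hdist i, Measure.map_apply ((hX i).prodMk (hYv i)) (hvm (measurableSet_optionBool s))]
    rfl
  set p : ℝ := (ν B).toReal with hp
  set γ : ℝ := (ν[A | B]).toReal with hγ
  set r : Option Bool → ℝ := fun o => (ν (v ⁻¹' {o})).toReal with hr
  have hνB_ne : ν B ≠ 0 := by
    intro h0
    rw [hp, h0] at hpy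
    simp at hpy
  have hp1 : p ≤ 1 := by
    rw [hp]
    have h1 : ν B ≤ 1 := prob_le_one
    calc (ν B).toReal ≤ (1 : ℝ≥0∞).toReal := ENNReal.toReal_mono ENNReal.one_ne_top h1
      _ = 1 := by simp
  have hcond : ν[A | B] = (ν B)⁻¹ * ν (B ∩ A) := cond_apply hBm ν A
  have hγ0 : 0 ≤ γ := ENNReal.toReal_nonneg
  have hγ1' : ν[A | B] ≤ 1 := by
    rw [hcond]
    calc (ν B)⁻¹ * ν (B ∩ A) ≤ (ν B)⁻¹ * ν B := by
          exact mul_le_mul_right (measure_mono Set.inter_subset_left) _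
      _ = 1 := ENNReal.inv_mul_cancel hνB_ne (measure_ne_top ν B)
  have hγ1 : γ ≤ 1 := by
    rw [hγ]
    calc (ν[A | B]).toReal ≤ (1 : ℝ≥0∞).toReal := ENNReal.toReal_mono ENNReal.one_ne_top hγ1'
      _ = 1 := by simp
  -- the r values
  have hsetT : v ⁻¹' {some true} = B ∩ A := by
    ext q
    simp only [Set.mem_preimage, Set.mem_singleton_iff, Set.mem_inter_iff, hv, hB, hA,
      Set.mem_setOf_eq]
    split_ifs <;> simp_all
  have hsetF : v ⁻¹' {some false} = B \ A := by
    ext q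
    simp only [Set.mem_preimage, Set.mem_singleton_iff, Set.mem_diff, hv, hB, hA,
      Set.mem_setOf_eq]
    split_ifs <;> simp_all
  have hsetN : v ⁻¹' {none} = Bᶜ := by
    ext q
    simp only [Set.mem_preimage, Set.mem_singleton_iff, Set.mem_compl_iff, hv, hB,
      Set.mem_setOf_eq]
    split_ifs <;> simp_all
  have hrt : r (some true) = p * γ := by
    rw [hr]
    simp only [hsetT]
    rw [hγ, hcond, ENNReal.toReal_mul, ENNReal.toReal_inv, hp]
    field_simp
    exact (mul_div_cancel_right₀ _ hpy.ne').symm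
  have hrf : r (some false) = p * (1 - γ) := by
    have hadd : ν (B ∩ A) + ν (B \ A) = ν B := measure_inter_add_diff B hAm
    have hadd' : (ν (B ∩ A)).toReal + (ν (B \ A)).toReal = p := by
      rw [hp, ← hadd, ENNReal.toReal_add (measure_ne_top _ _) (measure_ne_top _ _)]
    have hq1 : (ν (B ∩ A)).toReal = p * γ := by
      rw [hγ, hcond, ENNReal.toReal_mul, ENNReal.toReal_inv, hp]
      field_simp
      exact (mul_div_cancel_right₀ _ hpy.ne').symm
    rw [hr]
    simp only [hsetF]
    linarith
  have hrn : r none = 1 - p := by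
    have hadd : ν B + ν Bᶜ = 1 := by rw [measure_add_measure_compl hBm, measure_univ]
    have : p + (ν Bᶜ).toReal = 1 := by
      rw [hp, ← ENNReal.toReal_add (measure_ne_top _ _) (measure_ne_top _ _), hadd]
      simp
    rw [hr]
    simp only [hsetN]
    linarith
  have hkey1 : ∀ ω (i : Fin n), ((h (X i ω) = ybar ∧ Yv i ω = some y) ↔ V i ω = some true) := by
    intro ω i
    simp only [hV, hv]
    by_cases h1 : Yv i ω = some y <;> by_cases h2 : h (X i ω) = ybar <;> simp [h1, h2]
  have hkey2 : ∀ ω (i : Fin n), ((Yv i ω = some y) ↔ V i ω ≠ none) := by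
    intro ω i
    simp only [hV, hv]
    by_cases h1 : Yv i ω = some y <;> by_cases h2 : h (X i ω) = ybar <;> simp [h1, h2]
  set T : Finset (Fin n → Option Bool) := Finset.univ.filter (fun c =>
    t < |(∑ i, if c i = some true then (1:ℝ) else 0) /
         (∑ i, if c i ≠ none then (1:ℝ) else 0) - γ|) with hT
  have hEvent : {ω | t < |(∑ i, if h (X i ω) = ybar ∧ Yv i ω = some y then (1:ℝ) else 0) /
        (∑ i, if Yv i ω = some y then (1:ℝ) else 0) - γ|}
      = ⋃ c ∈ T, ⋂ i, V i ⁻¹' {c i} := by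
    ext ω
    simp only [Set.mem_setOf_eq, Set.mem_iUnion, Set.mem_iInter, Set.mem_preimage,
      Set.mem_singleton_iff, hT, Finset.mem_filter, Finset.mem_univ, true_and]
    constructor
    · intro hω
      refine ⟨fun i => V i ω, ?_, fun i => rfl⟩
      have e1 : (∑ i, if V i ω = some true then (1:ℝ) else 0)
          = ∑ i, if h (X i ω) = ybar ∧ Yv i ω = some y then (1:ℝ) else 0 :=
        Finset.sum_congr rfl (fun i _ => if_congr (hkey1 ω i).symm rfl rfl)
      have e2 : (∑ i, if V i ω ≠ none then (1:ℝ) else 0)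
          = ∑ i, if Yv i ω = some y then (1:ℝ) else 0 :=
        Finset.sum_congr rfl (fun i _ => if_congr (hkey2 ω i).symm rfl rfl)
      rw [e1, e2]
      exact hω
    · rintro ⟨c, hc, hcV⟩
      have e1 : (∑ i, if h (X i ω) = ybar ∧ Yv i ω = some y then (1:ℝ) else 0)
          = ∑ i, if c i = some true then (1:ℝ) else 0 :=
        Finset.sum_congr rfl (fun i _ => if_congr ((hkey1 ω i).trans (by rw [hcV i])) rfl rfl)
      have e2 : (∑ i, if Yv i ω = some y then (1:ℝ) else 0)
          = ∑ i, if c i ≠ none then (1:ℝ) else 0 :=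
        Finset.sum_congr rfl (fun i _ => if_congr ((hkey2 ω i).trans (by rw [hcV i])) rfl rfl)
      rw [e1, e2]
      exact hc
  rw [hEvent]
  have hdisj : (↑T : Set (Fin n → Option Bool)).Pairwise
      (Function.onFun Disjoint fun c => ⋂ i, V i ⁻¹' {c i}) := by
    intro c _ c' _ hne
    simp only [Function.onFun]
    rw [Set.disjoint_left]
    intro ω hω hω'
    simp only [Set.mem_iInter, Set.mem_preimage, Set.mem_singleton_iff] at hω hω'
    exact hne (funext fun i => (hω i).symm.trans (hω' i))
  have hmeas : ∀ c ∈ T, MeasurableSet (⋂ i, V i ⁻¹' {c i}) :=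
    fun c _ => MeasurableSet.iInter (fun i => hVm i (measurableSet_optionBool _))
  rw [measure_biUnion_finset hdisj hmeas]
  have hprod : ∀ c : Fin n → Option Bool, μ (⋂ i, V i ⁻¹' {c i})
      = ENNReal.ofReal (∏ i, r (c i)) := by
    intro c
    have hind := (iIndepFun_iff_measure_inter_preimage_eq_mul.mp hVind) Finset.univ
      (sets := fun i => {c i}) (fun i _ => measurableSet_optionBool _)
    have hbi : (⋂ i ∈ Finset.univ, V i ⁻¹' {c i}) = ⋂ i, V i ⁻¹' {c i} := by simp
    rw [hbi] at hind
    rw [hind]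
    have hvals : ∀ i : Fin n, μ (V i ⁻¹' {c i}) = ENNReal.ofReal (r (c i)) := by
      intro i
      rw [hVdist i, hr]
      exact (ENNReal.ofReal_toReal (measure_ne_top _ _)).symm
    rw [Finset.prod_congr rfl (fun i _ => hvals i),
      ← ENNReal.ofReal_prod_of_nonneg (fun i _ => ENNReal.toReal_nonneg)]
  rw [Finset.sum_congr rfl (fun c _ => hprod c),
    ← ENNReal.ofReal_sum_of_nonneg (fun c _ => Finset.prod_nonneg fun i _ => ENNReal.toReal_nonneg)]
  apply ENNReal.ofReal_le_ofReal
  have := real_main n p γ t r hrt hrf hrn hpy hp1 hγ0 hγ1 ht ht1 T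
    (fun c hc => (Finset.mem_filter.mp hc).2)
  exact this
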